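/- Let θ' Bernoulli trials, each with success probability ρ' = E[I(S'_k)]/n ≤ OPT/n, have empirical success fraction f. If θ' = λ'/KPT* with λ' = (2+ε')·ℓ·n·log n/(ε')² and KPT* ≤ OPT, then Pr[f·n > (1+ε')·OPT] ≤ exp(−(ε')²·λ'/((2+ε')·n)) = n^{−ℓ}. -/

import Mathlib

open MeasureTheory ProbabilityTheory

lemma log_lb {x : ℝ} (hx : 0 ≤ x) : 2 * x / (2 + x) ≤ Real.log (1 + x) := by
  set f : ℝ → ℝ := fun y => Real.log (1 + y) - 2 * y / (2 + y) with hf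
  have hD : ∀ y : ℝ, 0 ≤ y → HasDerivAt f (1 / (1 + y) - 4 / (2 + y) ^ 2) y := by
    intro y hy
    have h1 : (1:ℝ) + y ≠ 0 := by linarith
    have h2 : (2:ℝ) + y ≠ 0 := by linarith
    have hlog : HasDerivAt (fun y : ℝ => Real.log (1 + y)) (1 / (1 + y)) y := by
      have := ((hasDerivAt_id y).const_add 1).log h1
      simpa using this
    have hdiv : HasDerivAt (fun y : ℝ => 2 * y / (2 + y)) (4 / (2 + y) ^ 2) y := by
      have h : HasDerivAt (fun y : ℝ => 2 * y / (2 + y)) ((2 * 1 * (2 + y) - 2 * y * 1) / (2 + y) ^ 2) y := ((hasDerivAt_id y).const_mul 2).div ((hasDerivAt_id y).const_add 2) h2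
      convert h using 1
      field_simp
      ring
    exact hlog.sub hdiv
  have hmono : MonotoneOn f (Set.Ici 0) := by
    apply monotoneOn_of_deriv_nonneg (convex_Ici 0)
    · exact fun y hy => (hD y hy).continuousAt.continuousWithinAt
    · intro y hy
      rw [interior_Ici] at hy
      exact (hD y hy.le).differentiableAt.differentiableWithinAt
    · intro y hy
      rw [interior_Ici] at hy
      have hy' : 0 < y := hy
      rw [(hD y hy.le).deriv]
      rw [sub_nonneg, div_le_div_iff₀ (by nlinarith) (by linarith)]
      nlinarith [sq_nonneg y]
  have h0 : f 0 = 0 := by simp [hf]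
  have := hmono Set.self_mem_Ici (Set.mem_Ici.mpr hx) hx
  rw [h0] at this
  simp only [hf] at this
  linarith

set_option maxHeartbeats 1000000 in
/-- Core of the refinement step (Lemma 9 / Lemma 3 of Tang–Xiao–Shi): `θ'` Bernoulli trials,
each with success probability `ρ' = E[I(S'_k)]/n ≤ OPT/n`, have empirical success fraction
`f`. If `θ' = λ'/KPT*` with `λ' = (2+ε')·ℓ·n·log n/(ε')²` and `KPT* ≤ OPT`, then
`Pr[f·n > (1+ε')·OPT] ≤ exp(-(ε')²·λ'/((2+ε')·n)) = n^{-ℓ}`. -/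
theorem refine_kpt_upper_tail
    {Ω : Type*} [MeasureSpace Ω] [IsProbabilityMeasure (ℙ : Measure Ω)]
    (n : ℕ) (hn : 1 ≤ n) (ε' ℓ OPT EIS KPT : ℝ)
    (hε' : 0 < ε') (hℓ : 0 < ℓ) (hOPT : 0 < OPT)
    (hEIS0 : 0 ≤ EIS) (hEISle : EIS ≤ OPT)
    (hKPT0 : 0 < KPT) (hKPTle : KPT ≤ OPT)
    (θ : ℕ)
    (hθ : (θ:ℝ) = ((2 + ε') * ℓ * n * Real.log n / ε' ^ 2) / KPT)
    (Y : Fin θ → Ω → ℝ)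
    (hmeas : ∀ i, Measurable (Y i))
    (hindep : iIndepFun Y ℙ)
    (hBern : ∀ i ω, Y i ω = 0 ∨ Y i ω = 1)
    (hmean : ∀ i, ∫ ω, Y i ω ∂ℙ = EIS / n) :
    (ℙ {ω | (1 + ε') * OPT < ((∑ i, Y i ω) / θ) * n}).toReal
      ≤ Real.exp (-(ε' ^ 2 * ((2 + ε') * ℓ * n * Real.log n / ε' ^ 2)) / ((2 + ε') * n)) ∧
    Real.exp (-(ε' ^ 2 * ((2 + ε') * ℓ * n * Real.log n / ε' ^ 2)) / ((2 + ε') * n))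
      = (n:ℝ) ^ (-ℓ) := by
  have hn0 : (0:ℝ) < n := by exact_mod_cast hn
  have h2ε : (0:ℝ) < 2 + ε' := by linarith
  have hlogn : 0 ≤ Real.log n := Real.log_nonneg (by exact_mod_cast hn)
  set lam : ℝ := (2 + ε') * ℓ * n * Real.log n / ε' ^ 2 with hlam
  have hlam0 : 0 ≤ lam := by positivity
  constructor
  · -- main tail bound
    rcases Nat.eq_zero_or_pos θ with hθ0 | hθpos
    · have hempty : {ω | (1 + ε') * OPT < ((∑ i, Y i ω) / θ) * n} = ∅ := by
        ext ω
        simp only [Set.mem_setOf_eq, Set.mem_empty_iff_false, iff_false, not_lt]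
        haveI : IsEmpty (Fin θ) := by rw [hθ0]; infer_instance
        have hz : (∑ i, Y i ω) = 0 := by simp
        rw [hz]
        have : (0:ℝ) / θ * n = 0 := by simp
        rw [this]
        positivity
      rw [hempty]
      simp only [measure_empty, ENNReal.toReal_zero]
      positivity
    · have hθR : (0:ℝ) < θ := by exact_mod_cast hθpos
      set t : ℝ := Real.log (1 + ε') with ht
      have ht0 : 0 ≤ t := Real.log_nonneg (by linarith)
      have hexpt : Real.exp t = 1 + ε' := Real.exp_log (by linarith)
      set p : ℝ := EIS / n with hp
      have hp0 : 0 ≤ p := by positivity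
      have hpt : ∀ i ω, Real.exp (t * Y i ω) = 1 + (Real.exp t - 1) * Y i ω := by
        intro i ω
        rcases hBern i ω with h | h <;> simp [h]
      have hYint : ∀ i, Integrable (Y i) ℙ := by
        intro i
        apply Integrable.mono' (integrable_const (1:ℝ)) (hmeas i).aestronglyMeasurable
        filter_upwards with ω
        rcases hBern i ω with h | h <;> simp [h]
      have hint : ∀ i, Integrable (fun ω => Real.exp (t * Y i ω)) ℙ := by
        intro i
        have heq : (fun ω => Real.exp (t * Y i ω))
            = fun ω => 1 + (Real.exp t - 1) * Y i ω := funext fun ω => hpt i ω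
        rw [heq]
        exact (integrable_const 1).add ((hYint i).const_mul _)
      have hmgf : ∀ i, mgf (Y i) ℙ t = 1 + (Real.exp t - 1) * p := by
        intro i
        simp only [mgf]
        calc ∫ ω, Real.exp (t * Y i ω) ∂ℙ
            = ∫ ω, (1 + (Real.exp t - 1) * Y i ω) ∂ℙ := by
              exact integral_congr_ae (Filter.Eventually.of_forall fun ω => hpt i ω)
          _ = 1 + (Real.exp t - 1) * p := by
              rw [integral_add (integrable_const 1) ((hYint i).const_mul _),
                integral_const, integral_const_mul, hmean i, hp]
              simp
      set a : ℝ := (1 + ε') * OPT * θ / n with ha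
      have hintS : Integrable (fun ω => Real.exp (t * (∑ i, Y i) ω)) ℙ :=
        hindep.integrable_exp_mul_sum hmeas (fun i _ => hint i)
      have hkey : -t * a + (θ:ℝ) * ((Real.exp t - 1) * p)
          ≤ -(ε' ^ 2 * lam) / ((2 + ε') * n) := by
        have hθK : (θ:ℝ) * KPT = lam := by rw [hθ]; field_simp
        have hlog2 : 2 * ε' / (2 + ε') ≤ t := by
          have := log_lb hε'.le
          simpa [ht] using this
        have hεt : 2 * ε' ≤ t * (2 + ε') := by
          rw [div_le_iff₀ h2ε] at hlog2; linarith
        have hθO : lam ≤ (θ:ℝ) * OPT := by nlinarith [hθR.le, hKPTle]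
        have F1 : 2 * ε' * ((1 + ε') * θ * OPT) ≤ t * (2 + ε') * ((1 + ε') * θ * OPT) := by
          have : (0:ℝ) ≤ (1 + ε') * θ * OPT := by positivity
          exact mul_le_mul_of_nonneg_right hεt this
        have F2 : (θ:ℝ) * ε' * EIS * (2 + ε') ≤ (θ:ℝ) * ε' * OPT * (2 + ε') := by
          have : (0:ℝ) ≤ (θ:ℝ) * ε' * (2 + ε') := by positivity
          nlinarith [hEISle]
        have F3 : ε' ^ 2 * lam ≤ ε' ^ 2 * ((θ:ℝ) * OPT) :=
          mul_le_mul_of_nonneg_left hθO (by positivity)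
        have hne : (n:ℝ) ≠ 0 := hn0.ne'
        have key2 : (-t * a + (θ:ℝ) * ((Real.exp t - 1) * p)) * ((2 + ε') * n)
            = (-(t * ((1 + ε') * OPT * θ)) + (θ:ℝ) * (ε' * EIS)) * (2 + ε') := by
          rw [hexpt, ha, hp]
          field_simp
          ring
        rw [le_div_iff₀ (by positivity : (0:ℝ) < (2 + ε') * n), key2]
        nlinarith [F1, F2, F3]
      calc (ℙ {ω | (1 + ε') * OPT < ((∑ i, Y i ω) / θ) * n}).toReal
          ≤ (ℙ {ω | a ≤ (∑ i, Y i) ω}).toReal := by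
            refine ENNReal.toReal_mono (measure_ne_top _ _) (measure_mono ?_)
            intro ω hω
            simp only [Set.mem_setOf_eq, Finset.sum_apply] at hω ⊢
            rw [div_mul_eq_mul_div, lt_div_iff₀ hθR] at hω
            rw [ha, div_le_iff₀ hn0]
            linarith
        _ ≤ Real.exp (-t * a) * mgf (∑ i, Y i) ℙ t :=
            measure_ge_le_exp_mul_mgf a ht0 hintS
        _ = Real.exp (-t * a) * ∏ i, mgf (Y i) ℙ t := by
            rw [hindep.mgf_sum hmeas Finset.univ]
        _ = Real.exp (-t * a) * (1 + (Real.exp t - 1) * p) ^ θ := by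
            rw [Finset.prod_congr rfl (fun i _ => hmgf i), Finset.prod_const,
              Finset.card_univ, Fintype.card_fin]
        _ ≤ Real.exp (-t * a) * Real.exp ((Real.exp t - 1) * p) ^ θ := by
            gcongr
            · have h1e : (1:ℝ) ≤ Real.exp t := Real.one_le_exp ht0
              nlinarith [hp0, h1e]
            · linarith [Real.add_one_le_exp ((Real.exp t - 1) * p)]
        _ = Real.exp (-t * a + θ * ((Real.exp t - 1) * p)) := by
            rw [← Real.exp_nat_mul, ← Real.exp_add]
        _ ≤ Real.exp (-(ε' ^ 2 * lam) / ((2 + ε') * n)) := Real.exp_le_exp.mpr hkey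
  · rw [Real.rpow_def_of_pos hn0]
    congr 1
    rw [hlam]
    field_simp
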